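/- Let G = (V,E) be a finite simple graph, let E' ⊆ E, and let w : E → ℕ be a weight function with w(e) = 1 for every e ∈ E' and w(e) ≥ 2 for every e ∈ E ∖ E'. Let T ⊆ E be an edge set such that the spanning subgraph (V, T) is connected and acyclic (a spanning tree of G), and such that Σ_{e∈T'} w(e) ≥ Σ_{e∈T} w(e) for every T' ⊆ E with (V, T') connected and acyclic (i.e., T is a minimum-weight spanning tree). Then for all u, v ∈ V: if u and v are connected in the graph (V, E'), then u and v are connected in the graph (V, T ∩ E'). Consequently T ∩ E' is a spanning forest of the subgraph (V, E'). -/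

import Mathlib

open SimpleGraph

private lemma reach_of_adj_reach {V : Type*} {G H : SimpleGraph V}
    (h : ∀ a b : V, G.Adj a b → H.Reachable a b) :
    ∀ u v : V, G.Reachable u v → H.Reachable u v := by
  intro u v ⟨p⟩
  induction p with
  | nil => exact Reachable.refl _
  | cons hadj _ ih => exact (h _ _ hadj).trans ih

/-- Splitting a walk at a deleted edge. -/
private lemma walk_split {V : Type*} {G : SimpleGraph V} {x y : V}
    {D : SimpleGraph V} (hD : D = G \ fromEdgeSet {s(x, y)}) :
    ∀ {c d : V}, G.Walk c d → D.Reachable c d ∨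
      (D.Reachable c x ∧ D.Reachable y d) ∨ (D.Reachable c y ∧ D.Reachable x d) := by
  intro c d p
  induction p with
  | nil => exact Or.inl (Reachable.refl _)
  | @cons c c' d hadj q ih =>
    by_cases hf : s(c, c') = s(x, y)
    · rw [Sym2.eq_iff] at hf
      rcases hf with ⟨rfl, rfl⟩ | ⟨rfl, rfl⟩
      · rcases ih with h | ⟨h1, h2⟩ | ⟨h1, h2⟩
        · exact Or.inr (Or.inl ⟨Reachable.refl _, h⟩)
        · exact Or.inr (Or.inl ⟨Reachable.refl _, h2⟩)
        · exact Or.inl h2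
      · rcases ih with h | ⟨h1, h2⟩ | ⟨h1, h2⟩
        · exact Or.inr (Or.inr ⟨Reachable.refl _, h⟩)
        · exact Or.inl h2
        · exact Or.inr (Or.inr ⟨Reachable.refl _, h2⟩)
    · have hadj' : D.Adj c c' := by
        subst hD
        exact ⟨hadj, by simp [fromEdgeSet_adj, hf]⟩
      rcases ih with h | ⟨h1, h2⟩ | ⟨h1, h2⟩
      · exact Or.inl (hadj'.reachable.trans h)
      · exact Or.inr (Or.inl ⟨hadj'.reachable.trans h1, h2⟩)
      · exact Or.inr (Or.inr ⟨hadj'.reachable.trans h1, h2⟩)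

theorem mst_light_edges_spanning_forest {V : Type*} [Fintype V] (G : SimpleGraph V)
    (E' : Set (Sym2 V)) (hE'sub : E' ⊆ G.edgeSet)
    (w : Sym2 V → ℕ)
    (hw1 : ∀ e ∈ E', w e = 1)
    (hw2 : ∀ e ∈ G.edgeSet \ E', 2 ≤ w e)
    (T : Set (Sym2 V)) (hTsub : T ⊆ G.edgeSet)
    (hTconn : (SimpleGraph.fromEdgeSet T).Connected)
    (hTacyclic : (SimpleGraph.fromEdgeSet T).IsAcyclic)
    (hTmin : ∀ T' ⊆ G.edgeSet, (SimpleGraph.fromEdgeSet T').Connected →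
      (SimpleGraph.fromEdgeSet T').IsAcyclic → (∑ᶠ e ∈ T, w e) ≤ ∑ᶠ e ∈ T', w e) :
    (SimpleGraph.fromEdgeSet (T ∩ E')).IsAcyclic ∧
      ∀ u v : V, (SimpleGraph.fromEdgeSet E').Reachable u v →
        (SimpleGraph.fromEdgeSet (T ∩ E')).Reachable u v := by
  classical
  set GT := SimpleGraph.fromEdgeSet T with hGT
  set H := SimpleGraph.fromEdgeSet (T ∩ E') with hH
  have hle : H ≤ GT := fromEdgeSet_mono Set.inter_subset_left
  constructor
  · intro v c hc
    exact hTacyclic (c.mapLe hle) (hc.mapLe hle)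
  · refine reach_of_adj_reach ?_
    intro a b hab
    rw [fromEdgeSet_adj] at hab
    obtain ⟨heE', hne⟩ := hab
    set e := s(a, b) with he
    by_contra hreach
    -- e ∉ T
    have heT : e ∉ T := fun h => hreach (Adj.reachable (by rw [hH, fromEdgeSet_adj]; exact ⟨⟨h, heE'⟩, hne⟩))
    -- take a path from a to b in GT
    obtain ⟨p0⟩ := hTconn a b
    obtain ⟨p, hpp⟩ := p0.toPath
    -- some edge of p is not in E'
    have hex : ∃ f ∈ p.edges, f ∉ E' := by
      by_contra hall
      push_neg at hall
      refine hreach ⟨p.transfer H fun g hg => ?_⟩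
      have hg1 : g ∈ GT.edgeSet := p.edges_subset_edgeSet hg
      rw [hGT, edgeSet_fromEdgeSet] at hg1
      rw [hH, edgeSet_fromEdgeSet]
      exact ⟨⟨hg1.1, hall g hg⟩, hg1.2⟩
    obtain ⟨f, hfp, hfE'⟩ := hex
    have hfT : f ∈ T := by
      have := p.edges_subset_edgeSet hfp
      rw [hGT, edgeSet_fromEdgeSet] at this
      exact this.1
    have hfe : f ≠ e := fun h => hfE' (h ▸ heE')
    obtain ⟨x, y⟩ := f
    set D := GT \ fromEdgeSet {s(x, y)} with hD
    have hDle : D ≤ GT := sdiff_le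
    -- ¬ D.Reachable a b (path uniqueness)
    have hnDab : ¬ D.Reachable a b := by
      rintro ⟨q⟩
      have hq : ∀ g ∈ q.edges, g ∈ GT.edgeSet := fun g hg =>
        edgeSet_mono hDle (q.edges_subset_edgeSet hg)
      set q' : GT.Walk a b := q.transfer GT hq with hq'
      have hpath : q'.toPath = ⟨p, hpp⟩ := hTacyclic.path_unique _ _
      have hfq' : s(x, y) ∈ q'.edges := by
        have : s(x, y) ∈ (q'.toPath : GT.Walk a b).edges := by rw [hpath]; exact hfp
        exact q'.edges_toPath_subset this
      rw [hq', Walk.edges_transfer] at hfq'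
      have := q.edges_subset_edgeSet hfq'
      rw [hD, edgeSet_sdiff, edgeSet_fromEdgeSet] at this
      simp only [Set.mem_diff, edgeSet_fromEdgeSet, Set.mem_singleton_iff, Set.mem_setOf_eq] at this
      exact this.2 ⟨trivial, fun hdiag => this.1.2 ((Sym2.mk_isDiag_iff).mp hdiag)⟩
    -- every vertex is D-reachable to x or y
    have hxy : ∀ c : V, D.Reachable c x ∨ D.Reachable c y := by
      intro c
      obtain ⟨q⟩ := hTconn c x
      rcases walk_split hD q with h | ⟨h1, _⟩ | ⟨h1, h2⟩
      · exact Or.inl h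
      · exact Or.inl h1
      · exact Or.inr h1
    -- define the new tree
    set T' := insert e (T \ {s(x, y)}) with hT'
    set K := SimpleGraph.fromEdgeSet T' with hK
    have hxyT' : s(x, y) ∉ T' := by
      simp only [hT', Set.mem_insert_iff, Set.mem_diff, Set.mem_singleton_iff]
      rintro (h | ⟨-, h⟩)
      · exact hfe h
      · exact h trivial
    have hDleK : D ≤ K := by
      intro c d hcd
      rw [hD, sdiff_adj, hGT, fromEdgeSet_adj, fromEdgeSet_adj] at hcd
      obtain ⟨⟨hcd1, hcd2⟩, hcd3⟩ := hcd
      rw [hK, fromEdgeSet_adj]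
      refine ⟨Set.mem_insert_of_mem _ ⟨hcd1, fun h => hcd3 ⟨h, hcd2⟩⟩, hcd2⟩
    have hKab : K.Adj a b := by
      rw [hK, fromEdgeSet_adj]
      exact ⟨Set.mem_insert _ _, hne⟩
    -- K.Reachable x y
    have hKxy : K.Reachable x y := by
      rcases hxy a with ha | ha <;> rcases hxy b with hb | hb
      · exact absurd (ha.trans hb.symm) hnDab
      · exact ((reach_of_adj_reach (fun c d h => h.reachable) _ _ (ha.mono hDleK)).symm.trans
          (hKab.reachable.trans (reach_of_adj_reach (fun c d h => h.reachable) _ _ (hb.mono hDleK))))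
      · exact (reach_of_adj_reach (fun c d h => h.reachable) _ _ (hb.mono hDleK)).symm.trans
          (hKab.symm.reachable.trans (reach_of_adj_reach (fun c d h => h.reachable) _ _ (ha.mono hDleK)))
      · exact absurd (ha.trans hb.symm) hnDab
    -- K is connected
    have hKconn : K.Connected := by
      rw [connected_iff]
      refine ⟨?_, hTconn.nonempty⟩
      intro u v
      refine reach_of_adj_reach ?_ u v (hTconn u v)
      intro c d hcd
      by_cases hcd' : s(c, d) = s(x, y)
      · rw [Sym2.eq_iff] at hcd'
        rcases hcd' with ⟨rfl, rfl⟩ | ⟨rfl, rfl⟩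
        · exact hKxy
        · exact hKxy.symm
      · rw [hGT, fromEdgeSet_adj] at hcd
        refine Adj.reachable ?_
        rw [hK, fromEdgeSet_adj]
        exact ⟨Set.mem_insert_of_mem _ ⟨hcd.1, hcd'⟩, hcd.2⟩
    -- K is acyclic
    have hKacyclic : K.IsAcyclic := by
      intro v c hc
      by_cases hec : e ∈ c.edges
      · -- e is a bridge of K
        have hbridge : K.IsBridge s(a, b) := by
          rw [isBridge_iff]
          refine fun hr => ?_
          have hKe : K \ fromEdgeSet {s(a, b)} ≤ D := by
            intro c' d' h
            rw [sdiff_adj, hK, fromEdgeSet_adj] at h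
            obtain ⟨⟨h1, h2⟩, h3⟩ := h
            have h1' : s(c', d') ∈ T \ {s(x, y)} := by
              rcases Set.mem_insert_iff.mp h1 with h | h
              · refine absurd ?_ h3
                rw [fromEdgeSet_adj]
                exact ⟨h, h2⟩
              · exact h
            rw [hD, sdiff_adj, hGT, fromEdgeSet_adj]
            exact ⟨⟨h1'.1, h2⟩, by rw [fromEdgeSet_adj]; rintro ⟨hh, -⟩; exact h1'.2 hh⟩
          exact hnDab (hr.mono hKe)
        rw [isBridge_iff_adj_and_forall_cycle_notMem hKab] at hbridge
        exact hbridge c hc hec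
      · -- transfer cycle to GT
        have hsub : ∀ g ∈ c.edges, g ∈ GT.edgeSet := by
          intro g hg
          have := c.edges_subset_edgeSet hg
          rw [hK, edgeSet_fromEdgeSet] at this
          rcases Set.mem_insert_iff.mp this.1 with h | h
          · exact absurd (h ▸ hg) hec
          · rw [hGT, edgeSet_fromEdgeSet]; exact ⟨h.1, this.2⟩
        exact hTacyclic (c.transfer GT hsub) (hc.transfer hsub)
    -- weight contradiction
    have hT'sub : T' ⊆ G.edgeSet := by
      rw [hT']
      rintro g (rfl | ⟨hg, -⟩)
      · exact hE'sub heE'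
      · exact hTsub hg
    have hmin := hTmin T' hT'sub hKconn hKacyclic
    have hTfin : (T \ {s(x, y)}).Finite := (Set.toFinite T).diff
    have heq1 : ∑ᶠ g ∈ T', w g = w e + ∑ᶠ g ∈ T \ {s(x, y)}, w g := by
      rw [hT']
      exact finsum_mem_insert w (fun h => heT h.1) hTfin
    have heq2 : ∑ᶠ g ∈ T, w g = w s(x, y) + ∑ᶠ g ∈ T \ {s(x, y)}, w g := by
      conv_lhs => rw [show T = insert s(x, y) (T \ {s(x, y)}) by
        rw [Set.insert_diff_singleton]; exact (Set.insert_eq_of_mem hfT).symm]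
      exact finsum_mem_insert w (fun h => h.2 rfl) hTfin
    have hwe : w e = 1 := hw1 e heE'
    have hwf : 2 ≤ w s(x, y) := hw2 _ ⟨hTsub hfT, hfE'⟩
    omega
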